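/- For the unidirectionally y-coupled dyad of Rössler systems, the map Ψ : ℝ⁶ → ℝ⁶ sending the full state (x₁,y₁,z₁,x₂,y₂,z₂) to (x₂, ẋ₂, y₂, ẏ₂, ÿ₂, y⃛₂) (derivatives along the coupled flow) has Jacobian determinant equal to -ρ³ at every point; in particular, for ρ ≠ 0 the dyad is globally observable from the measurements (x₂, y₂). -/

import Mathlib

noncomputable section

/-- The unidirectionally y-coupled Rössler dyad vector field on ℝ⁶.
Coordinates: (x₁,y₁,z₁,x₂,y₂,z₂) = (p 0, …, p 5). -/
def dyadF (a₁ a₂ b c ρ : ℝ) (p : Fin 6 → ℝ) : Fin 6 → ℝ :=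
  ![-(p 1) - p 2, p 0 + a₁ * p 1, b + p 2 * (p 0 - c),
    -(p 4) - p 5, p 3 + a₂ * p 4 + ρ * (p 1 - p 4), b + p 5 * (p 3 - c)]

/-- Lie derivative of a scalar function along a vector field on ℝⁿ. -/
def lieD {n : ℕ} (f : (Fin n → ℝ) → Fin n → ℝ) (h : (Fin n → ℝ) → ℝ)
    (p : Fin n → ℝ) : ℝ :=
  ∑ i, fderiv ℝ h p (Pi.single i 1) * f p i

/-- Jacobian matrix of a family of n scalar functions on ℝⁿ. -/
def jacM {n : ℕ} (Ψ : Fin n → ((Fin n → ℝ) → ℝ)) (p : Fin n → ℝ) :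
    Matrix (Fin n) (Fin n) ℝ :=
  Matrix.of fun i j => fderiv ℝ (Ψ i) p (Pi.single j 1)

abbrev pr (i : Fin 6) : (Fin 6 → ℝ) →L[ℝ] ℝ := ContinuousLinearMap.proj i

def f1 : (Fin 6 → ℝ) → ℝ := fun p => -(p 4) - p 5
def f3 (a₂ ρ : ℝ) : (Fin 6 → ℝ) → ℝ := fun p => p 3 + a₂ * p 4 + ρ * (p 1 - p 4)
def f4 (a₁ a₂ ρ : ℝ) : (Fin 6 → ℝ) → ℝ := fun p =>
  ρ * (p 0 + a₁ * p 1) + (-(p 4) - p 5) + (a₂ - ρ) * (p 3 + a₂ * p 4 + ρ * (p 1 - p 4))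
def f5 (a₁ a₂ b c ρ : ℝ) : (Fin 6 → ℝ) → ℝ := fun p =>
  ρ * (-(p 1) - p 2) + (ρ * a₁ + (a₂ - ρ) * ρ) * (p 0 + a₁ * p 1)
    + (a₂ - ρ) * (-(p 4) - p 5)
    + (-1 + (a₂ - ρ) ^ 2) * (p 3 + a₂ * p 4 + ρ * (p 1 - p 4))
    - (b + p 5 * (p 3 - c))

variable (a₁ a₂ b c ρ : ℝ)

lemma dF0 (p : Fin 6 → ℝ) : dyadF a₁ a₂ b c ρ p 0 = -(p 1) - p 2 := rfl
lemma dF1 (p : Fin 6 → ℝ) : dyadF a₁ a₂ b c ρ p 1 = p 0 + a₁ * p 1 := rfl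
lemma dF2 (p : Fin 6 → ℝ) : dyadF a₁ a₂ b c ρ p 2 = b + p 2 * (p 0 - c) := rfl
lemma dF3 (p : Fin 6 → ℝ) : dyadF a₁ a₂ b c ρ p 3 = -(p 4) - p 5 := rfl
lemma dF4 (p : Fin 6 → ℝ) : dyadF a₁ a₂ b c ρ p 4 = p 3 + a₂ * p 4 + ρ * (p 1 - p 4) := rfl
lemma dF5 (p : Fin 6 → ℝ) : dyadF a₁ a₂ b c ρ p 5 = b + p 5 * (p 3 - c) := rfl

lemma hasD1 (p : Fin 6 → ℝ) : HasFDerivAt f1 (-(pr 4) - pr 5) p :=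
  (pr 4).hasFDerivAt.neg.sub (pr 5).hasFDerivAt

lemma hasD3 (p : Fin 6 → ℝ) :
    HasFDerivAt (f3 a₂ ρ) (pr 3 + a₂ • pr 4 + ρ • (pr 1 - pr 4)) p :=
  ((pr 3).hasFDerivAt.add ((pr 4).hasFDerivAt.const_mul a₂)).add
    (((pr 1).hasFDerivAt.sub (pr 4).hasFDerivAt).const_mul ρ)

lemma hasD4 (p : Fin 6 → ℝ) :
    HasFDerivAt (f4 a₁ a₂ ρ)
      (ρ • (pr 0 + a₁ • pr 1) + (-(pr 4) - pr 5)
        + (a₂ - ρ) • (pr 3 + a₂ • pr 4 + ρ • (pr 1 - pr 4))) p := by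
  have t1 : HasFDerivAt (fun p : Fin 6 → ℝ => ρ * (p 0 + a₁ * p 1))
      (ρ • (pr 0 + a₁ • pr 1)) p :=
    ((pr 0).hasFDerivAt.add ((pr 1).hasFDerivAt.const_mul a₁)).const_mul ρ
  have t2 : HasFDerivAt (fun p : Fin 6 → ℝ => -(p 4) - p 5) (-(pr 4) - pr 5) p :=
    (pr 4).hasFDerivAt.neg.sub (pr 5).hasFDerivAt
  have t3 : HasFDerivAt (fun p : Fin 6 → ℝ =>
      (a₂ - ρ) * (p 3 + a₂ * p 4 + ρ * (p 1 - p 4)))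
      ((a₂ - ρ) • (pr 3 + a₂ • pr 4 + ρ • (pr 1 - pr 4))) p :=
    (hasD3 a₂ ρ p).const_mul (a₂ - ρ)
  exact (t1.add t2).add t3

lemma hasD5 (p : Fin 6 → ℝ) :
    HasFDerivAt (f5 a₁ a₂ b c ρ)
      (ρ • (-(pr 1) - pr 2) + (ρ * a₁ + (a₂ - ρ) * ρ) • (pr 0 + a₁ • pr 1)
        + (a₂ - ρ) • (-(pr 4) - pr 5)
        + (-1 + (a₂ - ρ) ^ 2) • (pr 3 + a₂ • pr 4 + ρ • (pr 1 - pr 4))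
        - (p 5 • pr 3 + (p 3 - c) • pr 5)) p := by
  have t1 : HasFDerivAt (fun p : Fin 6 → ℝ => ρ * (-(p 1) - p 2))
      (ρ • (-(pr 1) - pr 2)) p :=
    ((pr 1).hasFDerivAt.neg.sub (pr 2).hasFDerivAt).const_mul ρ
  have t2 : HasFDerivAt (fun p : Fin 6 → ℝ =>
      (ρ * a₁ + (a₂ - ρ) * ρ) * (p 0 + a₁ * p 1))
      ((ρ * a₁ + (a₂ - ρ) * ρ) • (pr 0 + a₁ • pr 1)) p :=
    ((pr 0).hasFDerivAt.add ((pr 1).hasFDerivAt.const_mul a₁)).const_mul _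
  have t3 : HasFDerivAt (fun p : Fin 6 → ℝ => (a₂ - ρ) * (-(p 4) - p 5))
      ((a₂ - ρ) • (-(pr 4) - pr 5)) p :=
    ((pr 4).hasFDerivAt.neg.sub (pr 5).hasFDerivAt).const_mul _
  have t4 : HasFDerivAt (fun p : Fin 6 → ℝ =>
      (-1 + (a₂ - ρ) ^ 2) * (p 3 + a₂ * p 4 + ρ * (p 1 - p 4)))
      ((-1 + (a₂ - ρ) ^ 2) • (pr 3 + a₂ • pr 4 + ρ • (pr 1 - pr 4))) p :=
    (hasD3 a₂ ρ p).const_mul _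
  have t5 : HasFDerivAt (fun p : Fin 6 → ℝ => b + p 5 * (p 3 - c))
      (p 5 • pr 3 + (p 3 - c) • pr 5) p :=
    ((pr 5).hasFDerivAt.mul ((pr 3).hasFDerivAt.sub_const c)).const_add b
  exact (((t1.add t2).add t3).add t4).sub t5

lemma L1 : lieD (dyadF a₁ a₂ b c ρ) (fun p => p 3) = f1 := by
  funext p
  have h : fderiv ℝ (fun p : Fin 6 → ℝ => p 3) p = pr 3 := (pr 3).hasFDerivAt.fderiv
  simp [lieD, Fin.sum_univ_six, h, Pi.single_apply, dF0, dF1, dF2, dF3, dF4, dF5, f1]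

lemma L2 : lieD (dyadF a₁ a₂ b c ρ) (fun p => p 4) = f3 a₂ ρ := by
  funext p
  have h : fderiv ℝ (fun p : Fin 6 → ℝ => p 4) p = pr 4 := (pr 4).hasFDerivAt.fderiv
  simp only [lieD, Fin.sum_univ_six, h, dF0, dF1, dF2, dF3, dF4, dF5,
    ContinuousLinearMap.proj_apply, f3]
  simp only [Pi.single_apply, Fin.reduceEq, reduceIte, smul_eq_mul]
  ring

lemma L3 : lieD (dyadF a₁ a₂ b c ρ) (f3 a₂ ρ) = f4 a₁ a₂ ρ := by
  funext p
  simp only [lieD, (hasD3 a₂ ρ p).fderiv, Fin.sum_univ_six, dF0, dF1, dF2, dF3, dF4, dF5,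
    ContinuousLinearMap.add_apply, ContinuousLinearMap.smul_apply,
    ContinuousLinearMap.sub_apply, ContinuousLinearMap.neg_apply,
    ContinuousLinearMap.proj_apply, f4]
  simp only [Pi.single_apply, Fin.reduceEq, reduceIte, smul_eq_mul]
  ring

lemma L4 : lieD (dyadF a₁ a₂ b c ρ) (f4 a₁ a₂ ρ) = f5 a₁ a₂ b c ρ := by
  funext p
  simp only [lieD, (hasD4 a₁ a₂ ρ p).fderiv, Fin.sum_univ_six, dF0, dF1, dF2, dF3, dF4, dF5,
    ContinuousLinearMap.add_apply, ContinuousLinearMap.smul_apply,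
    ContinuousLinearMap.sub_apply, ContinuousLinearMap.neg_apply,
    ContinuousLinearMap.proj_apply, f5]
  simp only [Pi.single_apply, Fin.reduceEq, reduceIte, smul_eq_mul]
  ring

def Mexp (a₁ a₂ c ρ : ℝ) (p : Fin 6 → ℝ) : Matrix (Fin 6) (Fin 6) ℝ :=
  !![0, 0, 0, 1, 0, 0;
     0, 0, 0, 0, -1, -1;
     0, 0, 0, 0, 1, 0;
     0, ρ, 0, 1, a₂ - ρ, 0;
     ρ, ρ * a₁ + (a₂ - ρ) * ρ, 0, a₂ - ρ, -1 + (a₂ - ρ) * a₂ - (a₂ - ρ) * ρ, -1;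
     ρ * a₁ + (a₂ - ρ) * ρ,
       -ρ + (ρ * a₁ + (a₂ - ρ) * ρ) * a₁ + (-1 + (a₂ - ρ) ^ 2) * ρ,
       -ρ, (-1 + (a₂ - ρ) ^ 2) - p 5,
       -(a₂ - ρ) + (-1 + (a₂ - ρ) ^ 2) * a₂ - (-1 + (a₂ - ρ) ^ 2) * ρ,
       -(a₂ - ρ) - (p 3 - c)]

set_option maxHeartbeats 2000000 in
set_option maxRecDepth 8000 in
lemma det_Mexp (p : Fin 6 → ℝ) : (Mexp a₁ a₂ c ρ p).det = -ρ ^ 3 := by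
  simp (config := { decide := true }) [Mexp, Matrix.det_succ_row_zero, Fin.sum_univ_succ,
    Fin.succAbove, Fin.castSucc, Fin.castAdd, Fin.castLE, Fin.succ,
    show (![(0:ℝ), 0, 0, 0, -1, -1] : Fin 6 → ℝ) 5 = -1 from rfl]
  ring

set_option maxHeartbeats 1000000 in
lemma jac_eq (p : Fin 6 → ℝ) :
    jacM ![fun p => p 3, f1, fun p => p 4, f3 a₂ ρ, f4 a₁ a₂ ρ, f5 a₁ a₂ b c ρ] p
      = Mexp a₁ a₂ c ρ p := by
  have e0 : fderiv ℝ (fun p : Fin 6 → ℝ => p 3) p = pr 3 := (pr 3).hasFDerivAt.fderiv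
  have e2 : fderiv ℝ (fun p : Fin 6 → ℝ => p 4) p = pr 4 := (pr 4).hasFDerivAt.fderiv
  ext i j
  fin_cases i
  · show fderiv ℝ (fun p : Fin 6 → ℝ => p 3) p (Pi.single j 1) = _
    rw [e0]
    fin_cases j <;> simp [Mexp, Pi.single_apply] <;> first | rfl | ring
  · show fderiv ℝ f1 p (Pi.single j 1) = _
    rw [(hasD1 p).fderiv]
    fin_cases j <;> simp [Mexp, Pi.single_apply] <;> first | rfl | ring
  · show fderiv ℝ (fun p : Fin 6 → ℝ => p 4) p (Pi.single j 1) = _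
    rw [e2]
    fin_cases j <;> simp [Mexp, Pi.single_apply] <;> first | rfl | ring
  · show fderiv ℝ (f3 a₂ ρ) p (Pi.single j 1) = _
    rw [(hasD3 a₂ ρ p).fderiv]
    fin_cases j <;> simp [Mexp, Pi.single_apply] <;> first | rfl | ring
  · show fderiv ℝ (f4 a₁ a₂ ρ) p (Pi.single j 1) = _
    rw [(hasD4 a₁ a₂ ρ p).fderiv]
    fin_cases j <;> simp [Mexp, Pi.single_apply, smul_eq_mul] <;> first | rfl | ring
  · show fderiv ℝ (f5 a₁ a₂ b c ρ) p (Pi.single j 1) = _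
    rw [(hasD5 a₁ a₂ b c ρ p).fderiv]
    have m0 : Mexp a₁ a₂ c ρ p 5 0 = ρ * a₁ + (a₂ - ρ) * ρ := rfl
    have m1 : Mexp a₁ a₂ c ρ p 5 1
        = -ρ + (ρ * a₁ + (a₂ - ρ) * ρ) * a₁ + (-1 + (a₂ - ρ) ^ 2) * ρ := rfl
    have m2 : Mexp a₁ a₂ c ρ p 5 2 = -ρ := rfl
    have m3 : Mexp a₁ a₂ c ρ p 5 3 = (-1 + (a₂ - ρ) ^ 2) - p 5 := rfl
    have m4 : Mexp a₁ a₂ c ρ p 5 4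
        = -(a₂ - ρ) + (-1 + (a₂ - ρ) ^ 2) * a₂ - (-1 + (a₂ - ρ) ^ 2) * ρ := rfl
    have m5 : Mexp a₁ a₂ c ρ p 5 5 = -(a₂ - ρ) - (p 3 - c) := rfl
    fin_cases j <;>
      simp [m0, m1, m2, m3, m4, m5, Pi.single_apply, smul_eq_mul] <;> ring

/-- The map (x₂, ẋ₂, y₂, ẏ₂, ÿ₂, y⃛₂) has Jacobian determinant -ρ³ everywhere;
for ρ ≠ 0 the dyad is globally observable from (x₂, y₂). -/
theorem dyad_obs_x2y2 (a₁ a₂ b c ρ : ℝ) :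
    (∀ p : Fin 6 → ℝ,
      (jacM ![fun p => p 3, lieD (dyadF a₁ a₂ b c ρ) (fun p => p 3),
              fun p => p 4, lieD (dyadF a₁ a₂ b c ρ) (fun p => p 4),
              lieD (dyadF a₁ a₂ b c ρ) (lieD (dyadF a₁ a₂ b c ρ) (fun p => p 4)),
              lieD (dyadF a₁ a₂ b c ρ)
                (lieD (dyadF a₁ a₂ b c ρ) (lieD (dyadF a₁ a₂ b c ρ) (fun p => p 4)))]
        p).det = -ρ ^ 3) ∧
    (ρ ≠ 0 → ∀ p : Fin 6 → ℝ,
      IsUnit (jacM ![fun p => p 3, lieD (dyadF a₁ a₂ b c ρ) (fun p => p 3),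
              fun p => p 4, lieD (dyadF a₁ a₂ b c ρ) (fun p => p 4),
              lieD (dyadF a₁ a₂ b c ρ) (lieD (dyadF a₁ a₂ b c ρ) (fun p => p 4)),
              lieD (dyadF a₁ a₂ b c ρ)
                (lieD (dyadF a₁ a₂ b c ρ) (lieD (dyadF a₁ a₂ b c ρ) (fun p => p 4)))]
        p)) := by
  have key : ∀ p : Fin 6 → ℝ,
      (jacM ![fun p => p 3, f1, fun p => p 4, f3 a₂ ρ, f4 a₁ a₂ ρ,
        f5 a₁ a₂ b c ρ] p).det = -ρ ^ 3 := by
    intro p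
    have h : (jacM ![fun p => p 3, f1, fun p => p 4, f3 a₂ ρ, f4 a₁ a₂ ρ,
        f5 a₁ a₂ b c ρ] p).det = (Mexp a₁ a₂ c ρ p).det := by
      rw [jac_eq a₁ a₂ b c ρ p]
    exact h.trans (det_Mexp a₁ a₂ c ρ p)
  constructor
  · intro p
    rw [L2 a₁ a₂ b c ρ, L3 a₁ a₂ b c ρ, L4 a₁ a₂ b c ρ, L1 a₁ a₂ b c ρ]
    exact key p
  · intro hρ p
    rw [L2 a₁ a₂ b c ρ, L3 a₁ a₂ b c ρ, L4 a₁ a₂ b c ρ, L1 a₁ a₂ b c ρ,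
      Matrix.isUnit_iff_isUnit_det, key p]
    exact isUnit_iff_ne_zero.mpr (neg_ne_zero.mpr (pow_ne_zero 3 hρ))
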